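/- The measures N^{−1} O_N(z) d²z converge weakly to π^{−1}(1 − |z|²) 𝟙_{|z| ≤ 1} d²z: for every continuous compactly supported function f : ℂ → ℝ, lim_{N→∞} N^{−1} ∫_ℂ f(z) O_N(z) d²z = π^{−1} ∫_{|z| ≤ 1} f(z) (1 − |z|²) d²z, where d²z denotes Lebesgue measure on ℂ ≅ ℝ². -/

import Mathlib

open Filter MeasureTheory Finset Topology

namespace GinibreAux

lemma pow_div_factorial_mono {lam : ℝ} {n m : ℕ} (hnm : n ≤ m) (h : (m : ℝ) ≤ lam) :
    lam ^ n / n.factorial ≤ lam ^ m / m.factorial := by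
  induction m, hnm using Nat.le_induction with
  | base => exact le_refl _
  | succ m hm ih =>
    have hm1 : (m : ℝ) ≤ lam := by push_cast at h ⊢; linarith
    have h0 : (0:ℝ) ≤ lam := le_trans (by positivity) hm1
    refine le_trans (ih hm1) ?_
    have e : lam^(m+1)/((m+1).factorial : ℝ) = (lam/(m+1)) * (lam^m/m.factorial) := by
      have hf : ((m+1).factorial : ℝ) = ((m:ℝ)+1) * m.factorial := by
        rw [Nat.factorial_succ]; push_cast; ring
      rw [hf, pow_succ', mul_div_mul_comm]
    rw [e]
    have h1 : (1:ℝ) ≤ lam/(m+1) := by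
      rw [le_div_iff₀ (by positivity)]
      push_cast at h ⊢; linarith
    have h2 : (0:ℝ) ≤ lam^m/m.factorial := by positivity
    nlinarith

lemma tail_term_le {N j : ℕ} {r : ℝ} (hr : 0 ≤ r) (hj : N ≤ j + 1) (k : ℕ) :
    ((N:ℝ)*r) ^ (k+j) / (k+j).factorial ≤ ((N:ℝ)*r)^j / j.factorial * r ^ k := by
  induction k with
  | zero => simp
  | succ k ih =>
    have hNk : (N:ℝ) ≤ (k+j)+1 := by
      have : (N:ℝ) ≤ (j:ℝ)+1 := by exact_mod_cast hj
      push_cast; linarith [Nat.cast_nonneg (α := ℝ) k]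
    have key : ((N:ℝ)*r)/((k+j)+1) ≤ r := by
      rw [div_le_iff₀ (by positivity)]
      nlinarith
    have e : ((N:ℝ)*r)^(k+1+j)/(((k+1+j)).factorial : ℝ)
        = (((N:ℝ)*r)/((k+j)+1)) * (((N:ℝ)*r)^(k+j)/(k+j).factorial) := by
      have h' : k+1+j = (k+j)+1 := by ring
      have hf : (((k+j)+1).factorial : ℝ) = (((k+j):ℝ)+1) * (k+j).factorial := by
        rw [Nat.factorial_succ]; push_cast; ring
      rw [h', hf, pow_succ', mul_div_mul_comm]
    rw [e]
    calc (((N:ℝ)*r)/((k+j)+1)) * (((N:ℝ)*r)^(k+j)/(k+j).factorial)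
        ≤ r * (((N:ℝ)*r)^j/j.factorial * r^k) := by
          apply mul_le_mul key ih (by positivity) hr
      _ = ((N:ℝ)*r)^j/j.factorial * r^(k+1) := by ring

lemma exp_le_sum_add {N j : ℕ} {r : ℝ} (hr0 : 0 ≤ r) (hr1 : r < 1) (hj : N ≤ j + 1) :
    Real.exp ((N:ℝ)*r) ≤ (∑ n ∈ range j, ((N:ℝ)*r)^n/n.factorial)
      + ((N:ℝ)*r)^j/j.factorial * (1-r)⁻¹ := by
  let lam : ℝ := (N:ℝ)*r
  show Real.exp lam ≤ (∑ n ∈ range j, lam^n/n.factorial) + lam^j/j.factorial * (1-r)⁻¹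
  have hs : Summable (fun n : ℕ => lam^n/n.factorial) := Real.summable_pow_div_factorial lam
  have hsum : HasSum (fun n : ℕ => lam^n/n.factorial) (Real.exp lam) := by
    rw [Real.exp_eq_exp_ℝ]; exact NormedSpace.expSeries_div_hasSum_exp lam
  have hexp : Real.exp lam = ∑' n : ℕ, lam^n/n.factorial := hsum.tsum_eq.symm
  have hsplit := Summable.sum_add_tsum_nat_add j hs
  have htail : (∑' k : ℕ, lam^(k+j)/(k+j).factorial) ≤ lam^j/j.factorial * (1-r)⁻¹ := by
    have hg : Summable (fun k : ℕ => lam^j/j.factorial * r^k) :=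
      (summable_geometric_of_lt_one hr0 hr1).mul_left _
    calc (∑' k : ℕ, lam^(k+j)/(k+j).factorial)
        ≤ ∑' k : ℕ, lam^j/j.factorial * r^k := by
          exact Summable.tsum_le_tsum (fun k => tail_term_le hr0 hj k) ((summable_nat_add_iff j).mpr hs) hg
      _ = lam^j/j.factorial * (1-r)⁻¹ := by
          rw [tsum_mul_left, tsum_geometric_of_lt_one hr0 hr1]
  calc Real.exp lam = (∑ n ∈ range j, lam^n/n.factorial) + ∑' k : ℕ, lam^(k+j)/(k+j).factorial := by
        rw [hexp, ← hsplit]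
    _ ≤ _ := by gcongr

lemma decay {r : ℝ} (hr0 : 0 < r) (hr1 : r ≠ 1) :
    Tendsto (fun N : ℕ => (N:ℝ) * (((N:ℝ)*r)^N / N.factorial) * Real.exp (-((N:ℝ)*r)))
      atTop (𝓝 0) := by
  set q := r * Real.exp (1 - r) with hq
  have hq0 : 0 ≤ q := by positivity
  have hq1 : q < 1 := by
    have h := Real.add_one_lt_exp (x := r - 1) (by intro h; apply hr1; linarith)
    have hpos : (0:ℝ) < Real.exp (r-1) := Real.exp_pos _
    rw [hq, show (1:ℝ) - r = -(r-1) by ring, Real.exp_neg]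
    rw [mul_inv_lt_iff₀ hpos]
    nlinarith
  have key : ∀ N : ℕ, (N:ℝ) * (((N:ℝ)*r)^N / N.factorial) * Real.exp (-((N:ℝ)*r))
      ≤ (N:ℝ) * q ^ N := by
    intro N
    have hfac : ((N:ℝ))^N / N.factorial ≤ Real.exp N := by
      refine le_trans ?_ (Real.sum_le_exp_of_nonneg (Nat.cast_nonneg N) (N+1))
      exact Finset.single_le_sum (f := fun i => (N:ℝ)^i / i.factorial)
        (fun i _ => by positivity) (Finset.self_mem_range_succ N)
    have e1 : (N:ℝ) * (((N:ℝ)*r)^N / N.factorial) * Real.exp (-((N:ℝ)*r))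
        = (N:ℝ) * ((N:ℝ)^N / N.factorial) * (r^N * Real.exp (-((N:ℝ)*r))) := by
      rw [mul_pow]; ring
    have e2 : (N:ℝ) * Real.exp N * (r^N * Real.exp (-((N:ℝ)*r))) = (N:ℝ) * q ^ N := by
      rw [hq, mul_pow, ← Real.exp_nat_mul,
        show (N:ℝ)*(1-r) = (N:ℝ) + -((N:ℝ)*r) by ring, Real.exp_add]
      ring
    rw [e1, ← e2]
    gcongr
  refine squeeze_zero (fun N => by positivity) key ?_
  exact tendsto_self_mul_const_pow_of_lt_one hq0 hq1



noncomputable def F (j N : ℕ) (r : ℝ) : ℝ :=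
  Real.exp (-((N:ℝ)*r)) * ∑ n ∈ range j, ((N:ℝ)*r)^n/n.factorial

lemma F_nonneg (j N : ℕ) {r : ℝ} (hr : 0 ≤ r) : 0 ≤ F j N r := by
  unfold F
  have h0 : (0:ℝ) ≤ (N:ℝ)*r := by positivity
  positivity

lemma F_le_one (j N : ℕ) {r : ℝ} (hr : 0 ≤ r) : F j N r ≤ 1 := by
  unfold F
  have h1 : ∑ n ∈ range j, ((N:ℝ)*r)^n/n.factorial ≤ Real.exp ((N:ℝ)*r) :=
    Real.sum_le_exp_of_nonneg (by positivity) j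
  calc Real.exp (-((N:ℝ)*r)) * ∑ n ∈ range j, ((N:ℝ)*r)^n/n.factorial
      ≤ Real.exp (-((N:ℝ)*r)) * Real.exp ((N:ℝ)*r) :=
        mul_le_mul_of_nonneg_left h1 (Real.exp_pos _).le
    _ = 1 := by rw [← Real.exp_add]; simp

lemma one_sub_F_le {j N : ℕ} {r : ℝ} (hr0 : 0 ≤ r) (hr1 : r < 1) (hj : N ≤ j + 1) :
    1 - F j N r ≤ Real.exp (-((N:ℝ)*r)) * (((N:ℝ)*r)^j/j.factorial) * (1-r)⁻¹ := by
  have h := exp_le_sum_add (N := N) (j := j) hr0 hr1 hj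
  have key : Real.exp (-((N:ℝ)*r)) * Real.exp ((N:ℝ)*r) = 1 := by
    rw [← Real.exp_add]; simp
  have hepos : (0:ℝ) < Real.exp (-((N:ℝ)*r)) := Real.exp_pos _
  have h2 := mul_le_mul_of_nonneg_left h hepos.le
  rw [key, mul_add] at h2
  unfold F
  ring_nf at h2 ⊢
  linarith

lemma F_le_decay {j N : ℕ} (hj : j ≤ N) {r : ℝ} (hr : 1 ≤ r) :
    F j N r ≤ (N:ℝ) * (((N:ℝ)*r)^N/N.factorial) * Real.exp (-((N:ℝ)*r)) := by
  unfold F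
  have hr0 : (0:ℝ) ≤ r := le_trans zero_le_one hr
  have hNr : (N:ℝ) ≤ (N:ℝ)*r := by nlinarith [Nat.cast_nonneg (α := ℝ) N]
  have hterm : ∀ n ∈ range j, ((N:ℝ)*r)^n/n.factorial ≤ ((N:ℝ)*r)^N/N.factorial := by
    intro n hn
    exact pow_div_factorial_mono (le_trans (mem_range.1 hn).le hj) hNr
  have ht : (0:ℝ) ≤ ((N:ℝ)*r)^N/N.factorial := by positivity
  have hsum : ∑ n ∈ range j, ((N:ℝ)*r)^n/n.factorial ≤ (j:ℝ) * (((N:ℝ)*r)^N/N.factorial) := by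
    calc ∑ n ∈ range j, ((N:ℝ)*r)^n/n.factorial
        ≤ ∑ _n ∈ range j, ((N:ℝ)*r)^N/N.factorial := Finset.sum_le_sum hterm
      _ = (j:ℝ) * (((N:ℝ)*r)^N/N.factorial) := by
          rw [Finset.sum_const, card_range, nsmul_eq_mul]
  have hj' : (j:ℝ) ≤ (N:ℝ) := Nat.cast_le.2 hj
  have he : (0:ℝ) < Real.exp (-((N:ℝ)*r)) := Real.exp_pos _
  calc Real.exp (-((N:ℝ)*r)) * ∑ n ∈ range j, ((N:ℝ)*r)^n/n.factorial
      ≤ Real.exp (-((N:ℝ)*r)) * ((j:ℝ) * (((N:ℝ)*r)^N/N.factorial)) :=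
        mul_le_mul_of_nonneg_left hsum he.le
    _ ≤ Real.exp (-((N:ℝ)*r)) * ((N:ℝ) * (((N:ℝ)*r)^N/N.factorial)) := by
        apply mul_le_mul_of_nonneg_left _ he.le
        exact mul_le_mul_of_nonneg_right hj' ht
    _ = (N:ℝ) * (((N:ℝ)*r)^N/N.factorial) * Real.exp (-((N:ℝ)*r)) := by ring

lemma sum_id (M : ℕ) (lam : ℝ) :
    ∑ n ∈ range (M+1), (((M:ℝ)+1) - n) * lam^n / n.factorial
      = ((M:ℝ)+1) * ∑ n ∈ range (M+1), lam^n/n.factorial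
        - lam * ∑ n ∈ range M, lam^n/n.factorial := by
  have h2 : ∑ n ∈ range (M+1), (n:ℝ) * lam^n/n.factorial
      = lam * ∑ n ∈ range M, lam^n/n.factorial := by
    rw [Finset.sum_range_succ']
    simp only [Nat.cast_zero, zero_mul, pow_zero, Nat.factorial_zero, Nat.cast_one, zero_div,
      add_zero]
    rw [Finset.mul_sum]
    apply Finset.sum_congr rfl
    intro i _
    have hf : ((i+1).factorial : ℝ) = ((i:ℝ)+1) * i.factorial := by
      rw [Nat.factorial_succ]; push_cast; ring
    have hne : ((i:ℝ)+1) ≠ 0 := by positivity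
    rw [hf]
    push_cast
    field_simp
    ring
  have h1 : ∑ n ∈ range (M+1), (((M:ℝ)+1) - n) * lam^n / n.factorial
      = ((M:ℝ)+1) * ∑ n ∈ range (M+1), lam^n/n.factorial
        - ∑ n ∈ range (M+1), (n:ℝ) * lam^n/n.factorial := by
    rw [Finset.mul_sum, ← Finset.sum_sub_distrib]
    apply Finset.sum_congr rfl
    intro n _
    ring
  rw [h1, h2]

lemma expr_eq_F {N : ℕ} (hN : 1 ≤ N) (r : ℝ) :
    (N:ℝ)⁻¹ * (Real.exp (-((N:ℝ)*r)) *
      ∑ n ∈ range N, ((N:ℝ) - n) * ((N:ℝ)*r)^n / n.factorial)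
    = F N N r - r * F (N-1) N r := by
  obtain ⟨M, rfl⟩ : ∃ M, N = M + 1 := ⟨N - 1, (Nat.succ_pred_eq_of_pos hN).symm⟩
  have hcast : ((M+1 : ℕ):ℝ) = (M:ℝ)+1 := by push_cast; ring
  have hid := sum_id M (((M+1:ℕ):ℝ)*r)
  unfold F
  simp only [Nat.add_sub_cancel]
  rw [hcast] at hid ⊢
  rw [hid]
  have hne : ((M:ℝ)+1) ≠ 0 := by positivity
  field_simp

lemma lam_pow_pred {N : ℕ} (hN : 1 ≤ N) {r : ℝ} (hr : 0 < r) :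
    ((N:ℝ)*r)^(N-1)/((N-1).factorial : ℝ) = r⁻¹ * (((N:ℝ)*r)^N/N.factorial) := by
  obtain ⟨M, rfl⟩ : ∃ M, N = M + 1 := ⟨N - 1, (Nat.succ_pred_eq_of_pos hN).symm⟩
  simp only [Nat.add_sub_cancel]
  have hf : ((M+1).factorial : ℝ) = ((M:ℝ)+1) * M.factorial := by
    rw [Nat.factorial_succ]; push_cast; ring
  have hne : ((M:ℝ)+1) ≠ 0 := by positivity
  have hfne : (M.factorial : ℝ) ≠ 0 := by positivity
  rw [hf, pow_succ]
  have hcast : ((M+1 : ℕ):ℝ) = (M:ℝ)+1 := by push_cast; ring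
  rw [hcast]
  field_simp

lemma F_main_tendsto_one {r : ℝ} (hr0 : 0 < r) (hr1 : r < 1) :
    Tendsto (fun N : ℕ => F N N r) atTop (𝓝 1) := by
  have hd := decay hr0 (ne_of_lt hr1)
  have h0 : Tendsto (fun N : ℕ => 1 - F N N r) atTop (𝓝 0) := by
    apply squeeze_zero' (Eventually.of_forall fun N => by linarith [F_le_one N N hr0.le])
      (g := fun N : ℕ => (1-r)⁻¹ *
        ((N:ℝ) * (((N:ℝ)*r)^N/N.factorial) * Real.exp (-((N:ℝ)*r))))
    · filter_upwards [eventually_ge_atTop 1] with N hN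
      have h := one_sub_F_le (j := N) (N := N) hr0.le hr1 (Nat.le_succ N)
      have hN1 : (1:ℝ) ≤ (N:ℝ) := by exact_mod_cast hN
      have ht : (0:ℝ) ≤ ((N:ℝ)*r)^N/N.factorial * Real.exp (-((N:ℝ)*r)) := by positivity
      have hinv : (0:ℝ) ≤ (1-r)⁻¹ := inv_nonneg.2 (by linarith)
      calc 1 - F N N r ≤ Real.exp (-((N:ℝ)*r)) * (((N:ℝ)*r)^N/N.factorial) * (1-r)⁻¹ := h
        _ = ((1-r)⁻¹ * ((((N:ℝ)*r)^N/N.factorial) * Real.exp (-((N:ℝ)*r)))) * 1 := by ring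
        _ ≤ ((1-r)⁻¹ * ((((N:ℝ)*r)^N/N.factorial) * Real.exp (-((N:ℝ)*r)))) * (N:ℝ) :=
            mul_le_mul_of_nonneg_left hN1 (mul_nonneg hinv ht)
        _ = (1-r)⁻¹ * ((N:ℝ) * (((N:ℝ)*r)^N/N.factorial) * Real.exp (-((N:ℝ)*r))) := by ring
    · have := hd.const_mul ((1-r)⁻¹)
      simpa using this
  have := tendsto_const_nhds (x := (1:ℝ)) (f := atTop (α := ℕ)) |>.sub h0
  simpa using this

lemma F_pred_tendsto_one {r : ℝ} (hr0 : 0 < r) (hr1 : r < 1) :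
    Tendsto (fun N : ℕ => F (N-1) N r) atTop (𝓝 1) := by
  have hd := decay hr0 (ne_of_lt hr1)
  have h0 : Tendsto (fun N : ℕ => 1 - F (N-1) N r) atTop (𝓝 0) := by
    apply squeeze_zero' (Eventually.of_forall fun N => by linarith [F_le_one (N-1) N hr0.le])
      (g := fun N : ℕ => r⁻¹ * (1-r)⁻¹ *
        ((N:ℝ) * (((N:ℝ)*r)^N/N.factorial) * Real.exp (-((N:ℝ)*r))))
    · filter_upwards [eventually_ge_atTop 1] with N hN
      have hj : N ≤ (N-1) + 1 := by omega
      have h := one_sub_F_le (j := N-1) (N := N) hr0.le hr1 hj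
      rw [lam_pow_pred hN hr0] at h
      have hN1 : (1:ℝ) ≤ (N:ℝ) := by exact_mod_cast hN
      have ht : (0:ℝ) ≤ ((N:ℝ)*r)^N/N.factorial * Real.exp (-((N:ℝ)*r)) := by positivity
      have hinv : (0:ℝ) ≤ (1-r)⁻¹ := inv_nonneg.2 (by linarith)
      have hrinv : (0:ℝ) ≤ r⁻¹ := by positivity
      calc 1 - F (N-1) N r
          ≤ Real.exp (-((N:ℝ)*r)) * (r⁻¹ * (((N:ℝ)*r)^N/N.factorial)) * (1-r)⁻¹ := h
        _ = (r⁻¹ * (1-r)⁻¹ * ((((N:ℝ)*r)^N/N.factorial) * Real.exp (-((N:ℝ)*r)))) * 1 := by ring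
        _ ≤ (r⁻¹ * (1-r)⁻¹ * ((((N:ℝ)*r)^N/N.factorial) * Real.exp (-((N:ℝ)*r)))) * (N:ℝ) :=
            mul_le_mul_of_nonneg_left hN1 (mul_nonneg (mul_nonneg hrinv hinv) ht)
        _ = r⁻¹ * (1-r)⁻¹ * ((N:ℝ) * (((N:ℝ)*r)^N/N.factorial) * Real.exp (-((N:ℝ)*r))) := by ring
    · have := hd.const_mul (r⁻¹ * (1-r)⁻¹)
      simpa using this
  have := tendsto_const_nhds (x := (1:ℝ)) (f := atTop (α := ℕ)) |>.sub h0
  simpa using this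

lemma F_tendsto_zero {r : ℝ} (hr : 1 < r) (j : ℕ → ℕ) (hj : ∀ N, j N ≤ N) :
    Tendsto (fun N : ℕ => F (j N) N r) atTop (𝓝 0) := by
  have hr0 : (0:ℝ) < r := lt_trans zero_lt_one hr
  apply squeeze_zero (fun N => F_nonneg _ _ hr0.le)
    (fun N => F_le_decay (hj N) hr.le)
  exact decay hr0 (ne_of_gt hr)

lemma A_tendsto {r : ℝ} (hr0 : 0 ≤ r) (hr1 : r ≠ 1) :
    Tendsto (fun N : ℕ => (N:ℝ)⁻¹ * (Real.exp (-((N:ℝ)*r)) *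
      ∑ n ∈ range N, ((N:ℝ) - n) * ((N:ℝ)*r)^n / n.factorial)) atTop
      (𝓝 (if r ≤ 1 then 1 - r else 0)) := by
  have hcongr : ∀ᶠ N in atTop, F N N r - r * F (N-1) N r
      = (N:ℝ)⁻¹ * (Real.exp (-((N:ℝ)*r)) *
        ∑ n ∈ range N, ((N:ℝ) - n) * ((N:ℝ)*r)^n / n.factorial) := by
    filter_upwards [eventually_ge_atTop 1] with N hN
    exact (expr_eq_F hN r).symm
  apply Tendsto.congr' hcongr
  rcases eq_or_lt_of_le hr0 with h0 | h0
  · -- r = 0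
    rw [if_pos (by rw [← h0]; norm_num), ← h0]
    have hev : ∀ᶠ N in atTop, (1:ℝ) = F N N 0 - 0 * F (N-1) N 0 := by
      filter_upwards [eventually_ge_atTop 1] with N hN
      unfold F
      rw [Finset.sum_eq_single_of_mem 0 (mem_range.2 hN)
        (fun b _ hb => by simp [zero_pow hb])]
      simp
    simpa using Tendsto.congr' hev (tendsto_const_nhds (x := (1:ℝ)))
  · rcases lt_or_gt_of_ne hr1 with h1 | h1
    · rw [if_pos h1.le]
      have := (F_main_tendsto_one h0 h1).sub ((F_pred_tendsto_one h0 h1).const_mul r)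
      simpa using this
    · rw [if_neg (not_le.2 h1)]
      have h2 := F_tendsto_zero h1 (fun N => N) (fun N => le_refl N)
      have h3 := F_tendsto_zero h1 (fun N => N - 1) (fun N => Nat.sub_le N 1)
      have := h2.sub (h3.const_mul r)
      simpa using this

lemma A_nonneg (N : ℕ) {r : ℝ} (hr : 0 ≤ r) :
    0 ≤ (N:ℝ)⁻¹ * (Real.exp (-((N:ℝ)*r)) *
      ∑ n ∈ range N, ((N:ℝ) - n) * ((N:ℝ)*r)^n / n.factorial) := by
  have hs : 0 ≤ ∑ n ∈ range N, ((N:ℝ) - n) * ((N:ℝ)*r)^n / n.factorial := by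
    apply Finset.sum_nonneg
    intro n hn
    have h1 : (n:ℝ) ≤ (N:ℝ) := Nat.cast_le.2 (mem_range.1 hn).le
    have h2 : (0:ℝ) ≤ (N:ℝ)*r := by positivity
    have h3 : (0:ℝ) ≤ ((N:ℝ)*r)^n := pow_nonneg h2 n
    have h4 : (0:ℝ) ≤ (N:ℝ) - n := by linarith
    positivity
  positivity

lemma A_le_one (N : ℕ) {r : ℝ} (hr : 0 ≤ r) :
    (N:ℝ)⁻¹ * (Real.exp (-((N:ℝ)*r)) *
      ∑ n ∈ range N, ((N:ℝ) - n) * ((N:ℝ)*r)^n / n.factorial) ≤ 1 := by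
  rcases Nat.eq_zero_or_pos N with h | h
  · subst h; simp
  have hN : (0:ℝ) < N := by exact_mod_cast h
  have h2 : (0:ℝ) ≤ (N:ℝ)*r := by positivity
  have hs : ∑ n ∈ range N, ((N:ℝ) - n) * ((N:ℝ)*r)^n / n.factorial
      ≤ (N:ℝ) * ∑ n ∈ range N, ((N:ℝ)*r)^n / n.factorial := by
    rw [Finset.mul_sum]
    apply Finset.sum_le_sum
    intro n hn
    have h3 : (0:ℝ) ≤ ((N:ℝ)*r)^n / n.factorial := by positivity
    have h4 : (N:ℝ) - n ≤ (N:ℝ) := by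
      have : (0:ℝ) ≤ (n:ℝ) := Nat.cast_nonneg n
      linarith
    calc ((N:ℝ) - n) * ((N:ℝ)*r)^n / n.factorial
        = ((N:ℝ) - n) * (((N:ℝ)*r)^n / n.factorial) := by ring
      _ ≤ (N:ℝ) * (((N:ℝ)*r)^n / n.factorial) := mul_le_mul_of_nonneg_right h4 h3
  have hexp : ∑ n ∈ range N, ((N:ℝ)*r)^n / n.factorial ≤ Real.exp ((N:ℝ)*r) :=
    Real.sum_le_exp_of_nonneg h2 N
  have hepos : (0:ℝ) < Real.exp (-((N:ℝ)*r)) := Real.exp_pos _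
  have key : Real.exp (-((N:ℝ)*r)) * Real.exp ((N:ℝ)*r) = 1 := by
    rw [← Real.exp_add]; simp
  calc (N:ℝ)⁻¹ * (Real.exp (-((N:ℝ)*r)) *
        ∑ n ∈ range N, ((N:ℝ) - n) * ((N:ℝ)*r)^n / n.factorial)
      ≤ (N:ℝ)⁻¹ * (Real.exp (-((N:ℝ)*r)) *
        ((N:ℝ) * ∑ n ∈ range N, ((N:ℝ)*r)^n / n.factorial)) := by
        apply mul_le_mul_of_nonneg_left _ (by positivity)
        exact mul_le_mul_of_nonneg_left hs hepos.le
    _ = Real.exp (-((N:ℝ)*r)) * ∑ n ∈ range N, ((N:ℝ)*r)^n / n.factorial := by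
        field_simp
    _ ≤ Real.exp (-((N:ℝ)*r)) * Real.exp ((N:ℝ)*r) :=
        mul_le_mul_of_nonneg_left hexp hepos.le
    _ = 1 := key

end GinibreAux

open GinibreAux Topology

/-- The Chalker–Mehlig diagonal overlap density of the `N × N` complex Ginibre
ensemble. -/
noncomputable def ginibreDiagOverlap (N : ℕ) (z : ℂ) : ℝ :=
  Real.pi⁻¹ * Real.exp (-(N * ‖z‖ ^ 2)) *
    ∑ n ∈ Finset.range N, ((N : ℝ) - n) * (N * ‖z‖ ^ 2) ^ n / (Nat.factorial n : ℝ)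

lemma ginibre_continuous (N : ℕ) : Continuous (ginibreDiagOverlap N) := by
  unfold ginibreDiagOverlap
  have habs : Continuous fun z : ℂ => ‖z‖ := continuous_norm
  apply Continuous.mul
  · exact continuous_const.mul (Real.continuous_exp.comp (continuous_const.mul (habs.pow 2)).neg)
  · apply continuous_finset_sum
    intro n _
    exact (continuous_const.mul ((continuous_const.mul (habs.pow 2)).pow n)).div_const _

lemma ginibre_scaled_eq (N : ℕ) (z : ℂ) :
    (N:ℝ)⁻¹ * ginibreDiagOverlap N z = Real.pi⁻¹ * ((N:ℝ)⁻¹ * (Real.exp (-((N:ℝ) * ‖z‖ ^ 2)) *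
      ∑ n ∈ range N, ((N : ℝ) - n) * ((N:ℝ) * ‖z‖ ^ 2) ^ n / (Nat.factorial n : ℝ))) := by
  unfold ginibreDiagOverlap
  ring

/-- Weak convergence of `N⁻¹ O_N(z) d²z` to `π⁻¹ (1 - |z|²) 𝟙_{|z| ≤ 1} d²z`:
for every continuous compactly supported `f : ℂ → ℝ`,
`N⁻¹ ∫ f(z) O_N(z) d²z → π⁻¹ ∫_{|z| ≤ 1} f(z)(1 - |z|²) d²z`. -/
theorem ginibre_diagOverlap_weak_limit (f : ℂ → ℝ)
    (hf : Continuous f) (hsupp : HasCompactSupport f) :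
    Tendsto (fun N : ℕ => (N : ℝ)⁻¹ * ∫ z : ℂ, f z * ginibreDiagOverlap N z)
      atTop (nhds (Real.pi⁻¹ *
        ∫ z in {z : ℂ | ‖z‖ ≤ 1}, f z * (1 - ‖z‖ ^ 2))) := by
  have hπ : (0:ℝ) < Real.pi⁻¹ := inv_pos.2 Real.pi_pos
  -- limit function
  set L : ℂ → ℝ := fun z =>
    f z * (Real.pi⁻¹ * (if ‖z‖ ^ 2 ≤ 1 then 1 - ‖z‖ ^ 2 else 0)) with hLdef
  -- rewrite the prelimit integrals
  have hrw : ∀ N : ℕ, (N:ℝ)⁻¹ * ∫ z : ℂ, f z * ginibreDiagOverlap N z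
      = ∫ z : ℂ, f z * ((N:ℝ)⁻¹ * ginibreDiagOverlap N z) := by
    intro N
    rw [← integral_const_mul]
    congr 1
    funext z
    ring
  -- identify the limit integral
  have hmeas : MeasurableSet {z : ℂ | ‖z‖ ≤ 1} := by
    have : {z : ℂ | ‖z‖ ≤ 1} = Metric.closedBall 0 1 := by
      ext z; simp [Complex.dist_eq]
    rw [this]; exact measurableSet_closedBall
  have hL : ∫ z : ℂ, L z
      = Real.pi⁻¹ * ∫ z in {z : ℂ | ‖z‖ ≤ 1}, f z * (1 - ‖z‖ ^ 2) := by
    have h1 : (fun z : ℂ => L z) = fun z : ℂ => Real.pi⁻¹ *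
        (Set.indicator {z : ℂ | ‖z‖ ≤ 1}
          (fun z => f z * (1 - ‖z‖ ^ 2)) z) := by
      funext z
      have hsq : (‖z‖ ^ 2 ≤ 1) ↔ (‖z‖ ≤ 1) :=
        pow_le_one_iff_of_nonneg (norm_nonneg z) two_ne_zero
      by_cases h : ‖z‖ ≤ 1
      · rw [hLdef]
        simp only [Set.indicator_apply, Set.mem_setOf_eq, if_pos h, if_pos (hsq.2 h)]
        ring
      · rw [hLdef]
        simp only [Set.indicator_apply, Set.mem_setOf_eq, if_neg h,
          if_neg (fun hh => h (hsq.1 hh))]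
        ring
    rw [h1, integral_const_mul, integral_indicator hmeas]
  rw [← hL]
  -- dominated convergence
  have main : Tendsto (fun N : ℕ => ∫ z : ℂ, f z * ((N:ℝ)⁻¹ * ginibreDiagOverlap N z))
      atTop (𝓝 (∫ z : ℂ, L z)) := by
    apply tendsto_integral_of_dominated_convergence (bound := fun z => Real.pi⁻¹ * |f z|)
    · intro N
      exact (hf.mul (continuous_const.mul (ginibre_continuous N))).aestronglyMeasurable
    · exact ((hf.integrable_of_hasCompactSupport hsupp).abs).const_mul _
    · intro N
      apply Eventually.of_forall
      intro z
      have hr : (0:ℝ) ≤ ‖z‖ ^ 2 := by positivity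
      have h1 := A_nonneg N hr
      have h2 := A_le_one N hr
      have heq := ginibre_scaled_eq N z
      rw [Real.norm_eq_abs, abs_mul, heq]
      rw [abs_of_nonneg (by positivity : (0:ℝ) ≤ Real.pi⁻¹ * _)]
      calc |f z| * (Real.pi⁻¹ * ((N:ℝ)⁻¹ * (Real.exp (-((N:ℝ) * ‖z‖ ^ 2)) *
            ∑ n ∈ range N, ((N : ℝ) - n) * ((N:ℝ) * ‖z‖ ^ 2) ^ n / (Nat.factorial n : ℝ))))
          ≤ |f z| * (Real.pi⁻¹ * 1) := by
            apply mul_le_mul_of_nonneg_left _ (abs_nonneg _)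
            exact mul_le_mul_of_nonneg_left h2 hπ.le
        _ = Real.pi⁻¹ * |f z| := by ring
    · -- a.e. convergence
      have hsphere : volume {z : ℂ | ‖z‖ = 1} = 0 := by
        have : {z : ℂ | ‖z‖ = 1} = Metric.sphere (0:ℂ) 1 := by
          ext z; simp [Complex.dist_eq]
        rw [this]
        exact Measure.addHaar_sphere volume 0 1
      have hae : ∀ᵐ z : ℂ, ‖z‖ ≠ 1 := by
        rw [ae_iff]
        simpa using hsphere
      filter_upwards [hae] with z hz
      have hr0 : (0:ℝ) ≤ ‖z‖ ^ 2 := by positivity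
      have hr1 : ‖z‖ ^ 2 ≠ 1 := by
        intro h
        have h1 : (‖z‖ - 1) * (‖z‖ + 1) = 0 := by nlinarith
        rcases mul_eq_zero.1 h1 with h2 | h2
        · exact hz (by linarith)
        · have := norm_nonneg z; linarith
      have hten := (A_tendsto hr0 hr1).const_mul (f z * Real.pi⁻¹)
      have heq : ∀ N : ℕ, (f z * Real.pi⁻¹) * ((N:ℝ)⁻¹ *
          (Real.exp (-((N:ℝ) * ‖z‖ ^ 2)) *
            ∑ n ∈ range N, ((N : ℝ) - n) * ((N:ℝ) * ‖z‖ ^ 2) ^ n / (Nat.factorial n : ℝ)))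
          = f z * ((N:ℝ)⁻¹ * ginibreDiagOverlap N z) := by
        intro N
        rw [ginibre_scaled_eq]
        ring
      have hLz : L z = (f z * Real.pi⁻¹) *
          (if ‖z‖ ^ 2 ≤ 1 then 1 - ‖z‖ ^ 2 else 0) := by
        rw [hLdef]; ring
      rw [hLz]
      exact hten.congr heq
  exact main.congr fun N => (hrw N).symm
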